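/- arXiv:1605.02100 — 2 statements merged into one kernel-verified Lean document; each statement's English description precedes it below -/
import Mathlib

section
/- If λ is totally dissipative with respect to a group action (X is a countable union of wandering sets) and A ⊂ X is a recurrent set, then A is λ-negligible. -/
open MeasureTheory Filter Set

/-- A wandering set: almost every point visits it along a relatively compact set of group
elements only. -/
def IsWanderingSet {H X : Type*} [SMul H X] [TopologicalSpace H] [MeasurableSpace X]
    (lam : Measure X) (W : Set X) : Prop :=
  MeasurableSet W ∧ ∀ᵐ x ∂lam, IsCompact (closure {g : H | g • x ∈ W})

/-- A recurrent set: for every Borel subset `B ⊆ A` and almost every `x ∈ B`, the return-time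
set `{g : g • x ∈ B}` is not relatively compact. -/
def IsRecurrentSet {H X : Type*} [SMul H X] [TopologicalSpace H] [MeasurableSpace X]
    (lam : Measure X) (A : Set X) : Prop :=
  MeasurableSet A ∧ ∀ B ⊆ A, MeasurableSet B →
    ∀ᵐ x ∂lam, x ∈ B → ¬ IsCompact (closure {g : H | g • x ∈ B})

/-- If `lam` is totally dissipative (the space is a countable union of wandering sets), then
every recurrent set is negligible. -/
theorem recurrentSet_null_of_totallyDissipative
    {H X : Type*} [Group H] [TopologicalSpace H] [IsTopologicalGroup H]
    [LocallyCompactSpace H] [SecondCountableTopology H]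
    [MulAction H X] [MeasurableSpace X]
    (lam : Measure X) [SigmaFinite lam]
    (W : ℕ → Set X) (hW : ∀ i, IsWanderingSet (H := H) lam (W i))
    (hcover : (⋃ i, W i) = Set.univ)
    (A : Set X) (hA : IsRecurrentSet (H := H) lam A) :
    lam A = 0 := by
  obtain ⟨hAm, hrec⟩ := hA
  have key : ∀ i, lam (A ∩ W i) = 0 := by
    intro i
    obtain ⟨hWm, hWae⟩ := hW i
    have hrecB := hrec (A ∩ W i) inter_subset_left (hAm.inter hWm)
    have : ∀ᵐ x ∂lam, x ∉ A ∩ W i := by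
      filter_upwards [hWae, hrecB] with x hx hx2
      intro hxB
      exact hx2 hxB (hx.of_isClosed_subset isClosed_closure
        (closure_mono fun g hg => hg.2))
    simpa [ae_iff] using this
  have : A ⊆ ⋃ i, A ∩ W i := by
    rw [← inter_iUnion, hcover]; simp
  exact measure_mono_null this (by simpa using measure_iUnion_null key)
end

section
/- Suppose that for (Lebesgue-Grassmannian-)almost every k-plane V in ℝⁿ, the pushforward of a probability measure μ under the orthogonal projection onto V has lower dimension min(k, dim_low μ), and suppose a distribution P on probability measures on ℝⁿ is invariant under the pushforward action of SO(n). If for P-almost every μ the lower dimension dim_low(μ) equals a constant δ, then for every k-plane V, ∫ dim_low(π_V μ) dP(μ) = min(k, δ). -/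
open MeasureTheory Filter Metric Set
open scoped ENNReal

/-- Lower local dimension of a measure at a point. -/
noncomputable def lowerLocalDim {X : Type*} [MetricSpace X] [MeasurableSpace X]
    (μ : Measure X) (x : X) : ℝ :=
  liminf (fun ρ : ℝ => Real.log (μ (ball x ρ)).toReal / Real.log ρ)
    (nhdsWithin 0 (Ioi 0))

/-- Lower dimension of a measure: the `μ`-essential infimum of the lower local dimension. -/
noncomputable def lowerDim {X : Type*} [MetricSpace X] [MeasurableSpace X]
    (μ : Measure X) : ℝ :=
  essInf (lowerLocalDim μ) μ

/-- Corollary 2.7 of the paper. Here `νG` is the `O(n)`-invariant probability measure on the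
orthogonal group (whose pushforwards `g ↦ g(V₀)` give the invariant measure on the
Grassmannian of `k`-planes), `P` is an `SO(n)`-invariant distribution on probability measures
on `ℝⁿ`, Marstrand's theorem is assumed in the form that for every probability measure `μ`
and almost every `k`-plane the projection has lower dimension `min(k, dim_low μ)`, and
`P`-almost every `μ` has lower dimension `δ`. Then for *every* `k`-plane `V`, the mean lower
dimension of the projection onto `V` equals `min(k, δ)`. -/
noncomputable instance matrixMeasurableSpace {n : ℕ} :
    MeasurableSpace (Matrix (Fin n) (Fin n) ℝ) :=
  MeasurableSpace.pi


namespace Cor27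

theorem liminf_eq_toReal_liminf_ofReal {α : Type*} (l : Filter α) (f : α → ℝ)
    (hf : ∀ᶠ x in l, 0 ≤ f x) :
    liminf f l = (liminf (fun x => ENNReal.ofReal (f x)) l).toReal := by
  have hS : liminf f l = sSup {a : ℝ | ∀ᶠ x in l, a ≤ f x} := by
    simp only [liminf, limsInf, eventually_map]
  have hT : liminf (fun x => ENNReal.ofReal (f x)) l
      = sSup {a : ℝ≥0∞ | ∀ᶠ x in l, a ≤ ENNReal.ofReal (f x)} := by
    simp only [liminf, limsInf, eventually_map]
  set S : Set ℝ := {a : ℝ | ∀ᶠ x in l, a ≤ f x} with hSdef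
  set T : Set ℝ≥0∞ := {a : ℝ≥0∞ | ∀ᶠ x in l, a ≤ ENNReal.ofReal (f x)} with hTdef
  have hTdown : ∀ a b : ℝ≥0∞, a ≤ b → b ∈ T → a ∈ T := fun a b hab hb =>
    hb.mono fun x hx => le_trans hab hx
  have hmemS : ∀ a : ℝ, a ∈ S → 0 < a → ENNReal.ofReal a ∈ T := by
    intro a ha _
    exact ha.mono fun x hx => ENNReal.ofReal_le_ofReal hx
  have hmemT : ∀ a : ℝ, 0 < a → ENNReal.ofReal a ∈ T → a ∈ S := by
    intro a ha hmem
    filter_upwards [hmem, hf] with x hx hx0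
    exact (ENNReal.ofReal_le_ofReal_iff hx0).mp hx
  have h0S : (0:ℝ) ∈ S := hf
  have hnegS : ∀ a : ℝ, a ≤ 0 → a ∈ S := fun a ha => hf.mono fun x hx => ha.trans hx
  rw [hS, hT]
  rcases eq_or_ne (sSup T) ⊤ with htop | htop
  · -- S = univ, both sides are junk 0
    have hSuniv : S = univ := by
      ext a; simp only [mem_univ, iff_true]
      rcases le_or_gt a 0 with ha | ha
      · exact hnegS a ha
      · have : ENNReal.ofReal a ∈ T := by
          have hlt : ENNReal.ofReal a < sSup T := htop ▸ ENNReal.ofReal_lt_top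
          rcases lt_sSup_iff.mp hlt with ⟨b, hbT, hab⟩
          exact hTdown _ _ hab.le hbT
        exact hmemT a ha this
    rw [hSuniv, htop]
    simp [Real.sSup_univ]
  · set c := (sSup T).toReal with hc
    have hc0 : 0 ≤ c := ENNReal.toReal_nonneg
    have hsub1 : ∀ a ∈ S, a ≤ c := by
      intro a ha
      rcases le_or_gt a 0 with h | h
      · exact h.trans hc0
      · have : ENNReal.ofReal a ≤ sSup T := le_sSup (hmemS a ha h)
        have := ENNReal.toReal_mono htop this
        rwa [ENNReal.toReal_ofReal h.le] at this
    have hsub2 : ∀ a : ℝ, a < c → a ∈ S := by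
      intro a ha
      rcases le_or_gt a 0 with h | h
      · exact hnegS a h
      · have hlt : ENNReal.ofReal a < sSup T := by
          rw [← ENNReal.ofReal_toReal htop, ← hc]
          exact (ENNReal.ofReal_lt_ofReal_iff (h.trans ha)).mpr ha
        rcases lt_sSup_iff.mp hlt with ⟨b, hbT, hab⟩
        exact hmemT a h (hTdown _ _ hab.le hbT)
    refine le_antisymm (csSup_le ⟨0, h0S⟩ hsub1) ?_
    refine le_of_forall_lt fun b hb => ?_
    rcases exists_between hb with ⟨b', hbb', hb'c⟩
    exact lt_of_lt_of_le hbb' (le_csSup ⟨c, hsub1⟩ (hsub2 b' hb'c))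

/-- Rational representation of ENNReal essInf. -/
theorem essInf_eq_iSup_rat {X : Type*} [MeasurableSpace X] (ν : Measure X) (F : X → ℝ≥0∞) :
    essInf F ν = ⨆ q : ℚ,
      if ν {x | F x < ENNReal.ofReal q} = 0 then ENNReal.ofReal q else 0 := by
  classical
  rw [essInf_eq_sSup]
  set S : Set ℝ≥0∞ := {a | ν {x | F x < a} = 0} with hSdef
  have hdown : ∀ a b : ℝ≥0∞, a ≤ b → b ∈ S → a ∈ S := by
    intro a b hab hb
    exact measure_mono_null (fun x hx => lt_of_lt_of_le hx hab) hb
  have h0 : (0:ℝ≥0∞) ∈ S := by simp [hSdef]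
  refine le_antisymm ?_ ?_
  · refine sSup_le fun a ha => ?_
    refine le_of_forall_lt fun b hb => ?_
    have hbne : b ≠ ⊤ := hb.ne_top
    rcases eq_or_ne a ⊤ with hatop | hatop
    · obtain ⟨q, hq⟩ := exists_rat_gt b.toReal
      have hbq : b < ENNReal.ofReal q := (ENNReal.lt_ofReal_iff_toReal_lt hbne).mpr hq
      have hqS : ENNReal.ofReal q ∈ S := hdown _ ⊤ le_top (hatop ▸ ha)
      calc b < ENNReal.ofReal q := hbq
        _ = (if ν {x | F x < ENNReal.ofReal q} = 0 then ENNReal.ofReal q else 0) := by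
              exact (if_pos hqS).symm
        _ ≤ _ := le_iSup (fun q : ℚ =>
              if ν {x | F x < ENNReal.ofReal q} = 0 then ENNReal.ofReal q else 0) q
    · obtain ⟨q, hq1, hq2⟩ := exists_rat_btwn ((ENNReal.toReal_lt_toReal hbne hatop).mpr hb)
      have hbq : b < ENNReal.ofReal q := (ENNReal.lt_ofReal_iff_toReal_lt hbne).mpr hq1
      have hqa : ENNReal.ofReal q ≤ a := ENNReal.ofReal_le_of_le_toReal hq2.le
      have hqS : ENNReal.ofReal q ∈ S := hdown _ a hqa ha
      calc b < ENNReal.ofReal q := hbq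
        _ = (if ν {x | F x < ENNReal.ofReal q} = 0 then ENNReal.ofReal q else 0) := by
              exact (if_pos hqS).symm
        _ ≤ _ := le_iSup (fun q : ℚ =>
              if ν {x | F x < ENNReal.ofReal q} = 0 then ENNReal.ofReal q else 0) q
  · refine iSup_le fun q => ?_
    split_ifs with h
    · exact le_sSup h
    · exact bot_le


variable {X : Type*} [MetricSpace X] [MeasurableSpace X]

/-- surrogate for the integrand of the lower local dimension. -/
noncomputable def ballQ (ν : Measure X) (y : X) (r : ℝ) : ℝ≥0∞ :=
  ENNReal.ofReal (Real.log ((ν (ball y r)).toReal) / Real.log r)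

/-- countable surrogate for the ENNReal-valued lower local dimension. -/
noncomputable def LLD (ν : Measure X) (y : X) : ℝ≥0∞ :=
  ⨆ n : ℕ, ⨅ q : {q : ℚ // 0 < (q:ℝ) ∧ (q:ℝ) < 1/((n:ℝ)+2)}, ballQ ν y (q : ℝ)

lemma tendsto_measure_ball_left (ν : Measure X) (y : X) (ρ : ℝ) :
    Tendsto (fun r => ν (ball y r)) (nhdsWithin ρ (Iio ρ)) (nhds (ν (ball y ρ))) := by
  have hmono : Monotone fun r => ν (ball y r) :=
    fun a b hab => measure_mono (ball_subset_ball hab)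
  have h := hmono.tendsto_nhdsLT ρ
  have hsup : sSup ((fun r => ν (ball y r)) '' Iio ρ) = ν (ball y ρ) := by
    refine le_antisymm (sSup_le ?_) ?_
    · rintro _ ⟨r, hr, rfl⟩
      exact hmono hr.le
    · obtain ⟨u, hu_mono, hu_lt, hu_tendsto⟩ := exists_seq_strictMono_tendsto ρ
      have hball : ball y ρ = ⋃ j, ball y (u j) := by
        ext z
        simp only [mem_ball, mem_iUnion]
        constructor
        · intro h
          exact (hu_tendsto.eventually (eventually_gt_nhds h)).exists
        · rintro ⟨j, hj⟩
          exact hj.trans (hu_lt j)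
      have hdir : Directed (· ⊆ ·) fun j => ball y (u j) :=
        (Monotone.directed_le fun i j hij => ball_subset_ball (hu_mono.monotone hij))
      rw [hball, hdir.measure_iUnion]
      exact iSup_le fun j => le_sSup ⟨u j, hu_lt j, rfl⟩
  rwa [hsup] at h

lemma biInf_ballQ_rat (ν : Measure X) [IsFiniteMeasure ν] (y : X) {c : ℝ}
    (hc0 : 0 < c) (hc1 : c < 1) :
    ⨅ (ρ : ℝ) (_ : ρ ∈ Ioo (0:ℝ) c), ballQ ν y ρ
      = ⨅ q : {q : ℚ // 0 < (q:ℝ) ∧ (q:ℝ) < c}, ballQ ν y (q:ℝ) := by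
  refine le_antisymm (le_iInf fun q => iInf₂_le (q:ℝ) ⟨q.2.1, q.2.2⟩) (le_iInf₂ fun ρ hρ => ?_)
  rcases eq_or_ne (ν (ball y ρ)) 0 with h0 | h0
  · obtain ⟨q, hq0, hqρ⟩ := exists_rat_btwn hρ.1
    have hq0' : (0:ℝ) < q := hq0
    have hballq : ν (ball y (q:ℝ)) = 0 :=
      measure_mono_null (ball_subset_ball hqρ.le) h0
    have h1 : ballQ ν y (q:ℝ) = 0 := by simp [ballQ, hballq]
    have h2 : ballQ ν y ρ = 0 := by simp [ballQ, h0]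
    rw [h2, ← h1]
    exact iInf_le (fun q : {q : ℚ // 0 < (q:ℝ) ∧ (q:ℝ) < c} => ballQ ν y (q:ℝ))
      ⟨q, hq0', hqρ.trans hρ.2⟩
  · set s : Set ℝ := {x | x ∈ Ioo (0:ℝ) ρ ∧ ∃ q : ℚ, (q:ℝ) = x} with hsdef
    have hsclos : ρ ∈ closure s := by
      rw [Metric.mem_closure_iff]
      intro ε hε
      have hlt : max (ρ - ε) 0 < ρ := max_lt (by linarith) hρ.1
      obtain ⟨q, hq1, hq2⟩ := exists_rat_btwn hlt
      refine ⟨(q:ℝ), ⟨⟨lt_of_le_of_lt (le_max_right _ _) hq1, hq2⟩, q, rfl⟩, ?_⟩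
      rw [Real.dist_eq, abs_of_pos (by linarith)]
      have := lt_of_le_of_lt (le_max_left _ _) hq1
      linarith
    have hne : (nhdsWithin ρ s).NeBot := mem_closure_iff_nhdsWithin_neBot.mp hsclos
    have hfin : ν (ball y ρ) ≠ ⊤ := measure_ne_top ν _
    have htoReal_ne : (ν (ball y ρ)).toReal ≠ 0 := ENNReal.toReal_ne_zero.mpr ⟨h0, hfin⟩
    have hsub : s ⊆ Iio ρ := fun x hx => hx.1.2
    have hmeas : Tendsto (fun r => ν (ball y r)) (nhdsWithin ρ s) (nhds (ν (ball y ρ))) :=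
      (tendsto_measure_ball_left ν y ρ).mono_left (nhdsWithin_mono ρ hsub)
    have hnum : Tendsto (fun r => Real.log ((ν (ball y r)).toReal)) (nhdsWithin ρ s)
        (nhds (Real.log ((ν (ball y ρ)).toReal))) :=
      (Real.continuousAt_log htoReal_ne).tendsto.comp ((ENNReal.tendsto_toReal hfin).comp hmeas)
    have hden : Tendsto (fun r : ℝ => Real.log r) (nhdsWithin ρ s) (nhds (Real.log ρ)) :=
      ((Real.continuousAt_log hρ.1.ne').tendsto).mono_left nhdsWithin_le_nhds
    have hlogρ : Real.log ρ ≠ 0 := (Real.log_neg hρ.1 (hρ.2.trans hc1)).ne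
    have htend : Tendsto (fun r => ballQ ν y r) (nhdsWithin ρ s) (nhds (ballQ ν y ρ)) :=
      (ENNReal.continuous_ofReal.tendsto _).comp (hnum.div hden hlogρ)
    refine ge_of_tendsto htend ?_
    filter_upwards [self_mem_nhdsWithin] with x hx
    obtain ⟨⟨hx0, hxρ⟩, q, rfl⟩ := hx
    exact iInf_le (fun q : {q : ℚ // 0 < (q:ℝ) ∧ (q:ℝ) < c} => ballQ ν y (q:ℝ))
      ⟨q, hx0, hxρ.trans hρ.2⟩

lemma LLD_eq_liminf (ν : Measure X) [IsFiniteMeasure ν] (y : X) :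
    LLD ν y = liminf (fun ρ => ballQ ν y ρ) (nhdsWithin 0 (Ioi 0)) := by
  rw [(nhdsGT_basis_of_exists_gt (⟨1, one_pos⟩ : ∃ b:ℝ, (0:ℝ) < b)).liminf_eq_iSup_iInf]
  have key : ∀ n : ℕ,
      ⨅ (ρ : ℝ) (_ : ρ ∈ Ioo (0:ℝ) (1/((n:ℝ)+2))), ballQ ν y ρ
        = ⨅ q : {q : ℚ // 0 < (q:ℝ) ∧ (q:ℝ) < 1/((n:ℝ)+2)}, ballQ ν y (q:ℝ) := by
    intro n
    refine biInf_ballQ_rat ν y (by positivity) ?_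
    rw [div_lt_one (by positivity)]
    have : (0:ℝ) ≤ (n:ℝ) := Nat.cast_nonneg n
    linarith
  rw [LLD]
  rw [show (⨆ n : ℕ, ⨅ q : {q : ℚ // 0 < (q:ℝ) ∧ (q:ℝ) < 1/((n:ℝ)+2)}, ballQ ν y (q : ℝ))
      = ⨆ n : ℕ, ⨅ (ρ : ℝ) (_ : ρ ∈ Ioo (0:ℝ) (1/((n:ℝ)+2))), ballQ ν y ρ from
    iSup_congr fun n => (key n).symm]
  refine le_antisymm (iSup_le fun n => ?_) (iSup₂_le fun ε hε => ?_)
  · exact le_iSup₂_of_le (1/((n:ℝ)+2)) (by positivity) le_rfl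
  · obtain ⟨n, hn⟩ := exists_nat_one_div_lt hε
    have hsub : Ioo (0:ℝ) (1/((n:ℝ)+2)) ⊆ Ioo (0:ℝ) ε := by
      apply Ioo_subset_Ioo le_rfl
      calc 1/((n:ℝ)+2) ≤ 1/((n:ℝ)+1) := by
            apply one_div_le_one_div_of_le (by positivity); linarith
        _ ≤ ε := hn.le
    exact le_trans (iInf_le_iInf_of_subset hsub) (le_iSup (fun n : ℕ => ⨅ (ρ : ℝ) (_ : ρ ∈ Ioo (0:ℝ) (1/((n:ℝ)+2))), ballQ ν y ρ) n)


lemma lowerLocalDim_eq_toReal_LLD (ν : Measure X) (hν : ν univ ≤ 1) (y : X) :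
    lowerLocalDim ν y = (LLD ν y).toReal := by
  have hfin : IsFiniteMeasure ν := ⟨lt_of_le_of_lt hν ENNReal.one_lt_top⟩
  have hnonneg : ∀ᶠ ρ in nhdsWithin (0:ℝ) (Ioi 0),
      0 ≤ Real.log ((ν (ball y ρ)).toReal) / Real.log ρ := by
    filter_upwards [Ioo_mem_nhdsGT_of_mem (⟨le_refl (0:ℝ), one_pos⟩ : (0:ℝ) ∈ Ico (0:ℝ) 1)]
      with ρ hρ
    have h1 : (ν (ball y ρ)).toReal ≤ 1 := by
      have h := ENNReal.toReal_mono ENNReal.one_ne_top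
        (le_trans (measure_mono (subset_univ (ball y ρ))) hν)
      simpa using h
    exact div_nonneg_of_nonpos (Real.log_nonpos ENNReal.toReal_nonneg h1)
      (Real.log_neg hρ.1 hρ.2).le
  rw [lowerLocalDim, liminf_eq_toReal_liminf_ofReal _ _ hnonneg, LLD_eq_liminf]
  rfl

lemma lowerLocalDim_nonneg (ν : Measure X) (hν : ν univ ≤ 1) (y : X) :
    0 ≤ lowerLocalDim ν y := by
  rw [lowerLocalDim_eq_toReal_LLD ν hν y]; exact ENNReal.toReal_nonneg

lemma lowerDim_eq_toReal_iSup (ν : Measure X) (hν : ν univ ≤ 1) :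
    lowerDim ν = (⨆ q : ℚ,
      if ν {y | ENNReal.ofReal ((LLD ν y).toReal) < ENNReal.ofReal q} = 0
        then ENNReal.ofReal q else 0).toReal := by
  classical
  rw [lowerDim]
  have h1 : essInf (lowerLocalDim ν) ν = liminf (lowerLocalDim ν) (ae ν) := rfl
  rw [h1, liminf_eq_toReal_liminf_ofReal _ _
    (Eventually.of_forall fun y => lowerLocalDim_nonneg ν hν y)]
  congr 1
  have h2 : (fun y => ENNReal.ofReal (lowerLocalDim ν y))
      = fun y => ENNReal.ofReal ((LLD ν y).toReal) :=
    funext fun y => by rw [lowerLocalDim_eq_toReal_LLD ν hν y]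
  rw [h2]
  exact essInf_eq_iSup_rat ν _


noncomputable def subP {Y : Type*} [MeasurableSpace Y] (ν : Measure Y) : Measure Y :=
  if ν univ ≤ 1 then ν else 0

lemma subP_eq {Y : Type*} [MeasurableSpace Y] {ν : Measure Y} (hν : ν univ ≤ 1) :
    subP ν = ν := if_pos hν

lemma subP_univ_le {Y : Type*} [MeasurableSpace Y] (ν : Measure Y) : subP ν univ ≤ 1 := by
  unfold subP; split_ifs with h
  · exact h
  · simp

lemma measurable_subP {Y : Type*} [MeasurableSpace Y] :
    Measurable (subP : Measure Y → Measure Y) := by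
  apply Measure.measurable_of_measurable_coe
  intro s hs
  have h : (fun ν : Measure Y => subP ν s) = fun ν => if ν univ ≤ 1 then ν s else 0 := by
    funext ν; unfold subP; split_ifs <;> simp
  rw [h]
  exact Measurable.ite
    (measurableSet_le (Measure.measurable_coe MeasurableSet.univ) measurable_const)
    (Measure.measurable_coe hs) measurable_const

lemma measurable_subP_apply {α Y : Type*} [MeasurableSpace α] [MeasurableSpace Y]
    {f : α → Measure Y} (hf : Measurable f) {t : Set (α × Y)} (ht : MeasurableSet t) :
    Measurable fun a => subP (f a) (Prod.mk a ⁻¹' t) := by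
  let κ : ProbabilityTheory.Kernel α Y := ⟨fun a => subP (f a), measurable_subP.comp hf⟩
  have : ProbabilityTheory.IsFiniteKernel κ :=
    ⟨⟨1, ENNReal.one_lt_top, fun a => subP_univ_le _⟩⟩
  exact ProbabilityTheory.Kernel.measurable_kernel_prodMk_left (κ := κ) ht

variable [OpensMeasurableSpace X] [SecondCountableTopology X]

lemma measurable_subP_ball {α : Type*} [MeasurableSpace α] {f : α → Measure X}
    (hf : Measurable f) {g : α → X} (hg : Measurable g) (r : ℝ) :
    Measurable fun a => subP (f a) (ball (g a) r) := by
  have ht : MeasurableSet {p : α × X | dist p.2 (g p.1) < r} :=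
    measurableSet_lt (measurable_dist.comp (measurable_snd.prodMk (hg.comp measurable_fst)))
      measurable_const
  exact measurable_subP_apply hf ht

lemma measurable_LLD_comp {α : Type*} [MeasurableSpace α] {f : α → Measure X}
    (hf : Measurable f) {g : α → X} (hg : Measurable g) :
    Measurable fun a => LLD (subP (f a)) (g a) := by
  unfold LLD ballQ
  refine Measurable.iSup fun n => Measurable.iInf fun q => ?_
  exact ENNReal.measurable_ofReal.comp
    (((measurable_subP_ball hf hg _).ennreal_toReal.log).div_const _)

open Classical in
noncomputable def LD (ν : Measure X) : ℝ :=
  (⨆ q : ℚ, if subP ν {y | ENNReal.ofReal ((LLD (subP ν) y).toReal) < ENNReal.ofReal q} = 0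
      then ENNReal.ofReal q else 0).toReal

lemma LD_eq {ν : Measure X} (hν : ν univ ≤ 1) : LD ν = lowerDim ν := by
  rw [LD, subP_eq hν]
  exact (lowerDim_eq_toReal_iSup ν hν).symm

lemma measurable_LD : Measurable (LD : Measure X → ℝ) := by
  classical
  refine Measurable.ennreal_toReal (Measurable.iSup fun q => ?_)
  have hG : Measurable fun p : Measure X × X =>
      ENNReal.ofReal ((LLD (subP p.1) p.2).toReal) :=
    ENNReal.measurable_ofReal.comp (measurable_LLD_comp measurable_fst measurable_snd).ennreal_toReal
  have ht : MeasurableSet {p : Measure X × X |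
      ENNReal.ofReal ((LLD (subP p.1) p.2).toReal) < ENNReal.ofReal q} :=
    measurableSet_lt hG measurable_const
  have hmeas := measurable_subP_apply measurable_id ht
  exact Measurable.ite (hmeas (measurableSet_singleton 0)) measurable_const measurable_const

lemma lowerDim_map_isometry {Y : Type*} [MetricSpace Y] [MeasurableSpace Y]
    {ι : X → Y} (hemb : MeasurableEmbedding ι) (hiso : Isometry ι) (ν : Measure X) :
    lowerDim (ν.map ι) = lowerDim ν := by
  have hlld : ∀ x, lowerLocalDim (ν.map ι) (ι x) = lowerLocalDim ν x := by
    intro x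
    unfold lowerLocalDim
    congr 1
    funext ρ
    rw [hemb.map_apply]
    have hball : ι ⁻¹' ball (ι x) ρ = ball x ρ := by
      ext z; simp [mem_ball, hiso.dist_eq]
    rw [hball]
  rw [lowerDim, lowerDim, essInf_eq_sSup, essInf_eq_sSup]
  congr 1
  ext a
  simp only [mem_setOf_eq]
  rw [hemb.map_apply]
  have h2 : ι ⁻¹' {y | lowerLocalDim (ν.map ι) y < a} = {x | lowerLocalDim ν x < a} := by
    ext x; simp only [mem_preimage, mem_setOf_eq, hlld x]
  rw [h2]


variable {n : ℕ}

lemma toEuclideanLin_star_apply {g : Matrix (Fin n) (Fin n) ℝ}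
    (hg : g ∈ Matrix.orthogonalGroup (Fin n) ℝ) (x : EuclideanSpace ℝ (Fin n)) :
    Matrix.toEuclideanLin (star g) (Matrix.toEuclideanLin g x) = x := by
  have h1 : star g * g = 1 := (Unitary.mem_iff.mp hg).1
  simp [Matrix.toEuclideanLin_apply, Matrix.mulVec_mulVec, h1, Matrix.one_mulVec]

lemma inner_toEuclideanLin_left (g : Matrix (Fin n) (Fin n) ℝ)
    (x y : EuclideanSpace ℝ (Fin n)) :
    (inner ℝ (Matrix.toEuclideanLin g x) y : ℝ)
      = inner ℝ x (Matrix.toEuclideanLin (star g) y) := by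
  rw [Matrix.star_eq_conjTranspose, Matrix.toEuclideanLin_conjTranspose_eq_adjoint,
    LinearMap.adjoint_inner_right]

lemma inner_toEuclideanLin {g : Matrix (Fin n) (Fin n) ℝ}
    (hg : g ∈ Matrix.orthogonalGroup (Fin n) ℝ) (x y : EuclideanSpace ℝ (Fin n)) :
    (inner ℝ (Matrix.toEuclideanLin g x) (Matrix.toEuclideanLin g y) : ℝ) = inner ℝ x y := by
  rw [inner_toEuclideanLin_left, toEuclideanLin_star_apply hg]

lemma isometry_toEuclideanLin {g : Matrix (Fin n) (Fin n) ℝ}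
    (hg : g ∈ Matrix.orthogonalGroup (Fin n) ℝ) :
    Isometry (⇑(Matrix.toEuclideanLin g) :
      EuclideanSpace ℝ (Fin n) → EuclideanSpace ℝ (Fin n)) := by
  refine AddMonoidHomClass.isometry_of_norm (Matrix.toEuclideanLin g) fun x => ?_
  have h := inner_toEuclideanLin hg x x
  rw [real_inner_self_eq_norm_mul_norm, real_inner_self_eq_norm_mul_norm] at h
  exact (mul_self_inj_of_nonneg (norm_nonneg _) (norm_nonneg _)).mp h

lemma measurableEmbedding_toEuclideanLin {g : Matrix (Fin n) (Fin n) ℝ}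
    (hg : g ∈ Matrix.orthogonalGroup (Fin n) ℝ) :
    MeasurableEmbedding (⇑(Matrix.toEuclideanLin g) :
      EuclideanSpace ℝ (Fin n) → EuclideanSpace ℝ (Fin n)) :=
  ((isometry_toEuclideanLin hg).isClosedEmbedding).measurableEmbedding

lemma proj_conj {g : Matrix (Fin n) (Fin n) ℝ}
    (hg : g ∈ Matrix.orthogonalGroup (Fin n) ℝ)
    (V : Submodule ℝ (EuclideanSpace ℝ (Fin n))) (x : EuclideanSpace ℝ (Fin n)) :
    ((Submodule.orthogonalProjectionOnto
        (V.map (Matrix.toEuclideanLin g :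
          EuclideanSpace ℝ (Fin n) →ₗ[ℝ] EuclideanSpace ℝ (Fin n))) x :
        EuclideanSpace ℝ (Fin n)))
      = Matrix.toEuclideanLin g
          ((Submodule.orthogonalProjectionOnto V (Matrix.toEuclideanLin (star g) x) :
            EuclideanSpace ℝ (Fin n))) := by
  apply Submodule.eq_starProjection_of_mem_of_inner_eq_zero
  · exact Submodule.mem_map_of_mem (SetLike.coe_mem _)
  · rintro w ⟨v, hv, rfl⟩
    rw [real_inner_comm]
    rw [show (Matrix.toEuclideanLin g v : EuclideanSpace ℝ (Fin n)) =
      Matrix.toEuclideanLin g v from rfl]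
    rw [inner_toEuclideanLin_left]
    rw [map_sub, toEuclideanLin_star_apply hg]
    rw [real_inner_comm]
    exact Submodule.starProjection_inner_eq_zero (Matrix.toEuclideanLin (star g) x) v hv


-- ===== new material =====

/-- coe composed with orthogonal projection. -/
noncomputable def Pv (V : Submodule ℝ (EuclideanSpace ℝ (Fin n))) :
    EuclideanSpace ℝ (Fin n) → EuclideanSpace ℝ (Fin n) :=
  fun x => (Submodule.orthogonalProjectionOnto V x : EuclideanSpace ℝ (Fin n))

lemma continuous_Pv (V : Submodule ℝ (EuclideanSpace ℝ (Fin n))) : Continuous (Pv V) :=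
  continuous_subtype_val.comp (Submodule.orthogonalProjectionOnto V).continuous

/-- `lowerDim` of projection to subtype vs to ambient. -/
lemma lowerDim_proj_subtype (V : Submodule ℝ (EuclideanSpace ℝ (Fin n)))
    (ν : Measure (EuclideanSpace ℝ (Fin n))) :
    lowerDim (ν.map (fun x => Submodule.orthogonalProjectionOnto V x)) = lowerDim (ν.map (Pv V)) := by
  have hcoe : MeasurableEmbedding ((↑) : V → EuclideanSpace ℝ (Fin n)) :=
    (isometry_subtype_coe.isClosedEmbedding).measurableEmbedding
  have h1 : ν.map (Pv V)
      = (ν.map (fun x => Submodule.orthogonalProjectionOnto V x)).map ((↑) : V → EuclideanSpace ℝ (Fin n)) := by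
    rw [Measure.map_map hcoe.measurable (Submodule.orthogonalProjectionOnto V).continuous.measurable]
    rfl
  rw [h1, lowerDim_map_isometry hcoe isometry_subtype_coe]

/-- The function `BB V g` is `Pv V` precomposed with multiplication by `star g`. -/
noncomputable def BB (V : Submodule ℝ (EuclideanSpace ℝ (Fin n)))
    (g : Matrix (Fin n) (Fin n) ℝ) :
    EuclideanSpace ℝ (Fin n) → EuclideanSpace ℝ (Fin n) :=
  fun x => Pv V (Matrix.toEuclideanLin (star g) x)

lemma measurable_BB (V : Submodule ℝ (EuclideanSpace ℝ (Fin n)))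
    (g : Matrix (Fin n) (Fin n) ℝ) : Measurable (BB V g) :=
  ((continuous_Pv V).comp
    (Matrix.toEuclideanLin (star g) :
      EuclideanSpace ℝ (Fin n) →ₗ[ℝ] EuclideanSpace ℝ (Fin n)).continuous_of_finiteDimensional).measurable

lemma measurable_BB_uncurry (V : Submodule ℝ (EuclideanSpace ℝ (Fin n))) :
    Measurable fun p : (Matrix (Fin n) (Fin n) ℝ) × EuclideanSpace ℝ (Fin n) =>
      BB V p.1 p.2 := by
  have h1 : Measurable fun p : (Matrix (Fin n) (Fin n) ℝ) × EuclideanSpace ℝ (Fin n) =>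
      (Matrix.toEuclideanLin (star p.1) p.2 : EuclideanSpace ℝ (Fin n)) := by
    refine (WithLp.measurable_toLp 2 (Fin n → ℝ)).comp (f := fun p : (Matrix (Fin n) (Fin n) ℝ) × EuclideanSpace ℝ (Fin n) => WithLp.ofLp (Matrix.toEuclideanLin (star p.1) p.2 : EuclideanSpace ℝ (Fin n))) ?_
    apply measurable_pi_lambda
    intro i
    have hcoord : ∀ p : (Matrix (Fin n) (Fin n) ℝ) × EuclideanSpace ℝ (Fin n),
        (Matrix.toEuclideanLin (star p.1) p.2 : EuclideanSpace ℝ (Fin n)) i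
          = ∑ j, p.1 j i * p.2 j := by
      intro p
      simp [Matrix.toEuclideanLin_apply, Matrix.mulVec, dotProduct,
        Matrix.star_apply, Matrix.star_eq_conjTranspose, Matrix.conjTranspose_apply]
    simp only [hcoord]
    apply Finset.measurable_sum
    intro j _
    have hm1 : Measurable fun g : Matrix (Fin n) (Fin n) ℝ => g j i := by
      have h1 : Measurable fun g : Matrix (Fin n) (Fin n) ℝ => g j :=
        measurable_pi_apply (X := fun _ : Fin n => Fin n → ℝ) j
      have h2 : Measurable fun v : Fin n → ℝ => v i := measurable_pi_apply i
      exact h2.comp h1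
    have hm2 : Measurable fun x : EuclideanSpace ℝ (Fin n) => x j :=
      (measurable_pi_apply (X := fun _ : Fin n => ℝ) j).comp (WithLp.measurable_ofLp 2 (Fin n → ℝ))
    exact Measurable.mul (hm1.comp measurable_fst) (hm2.comp measurable_snd)
  exact (continuous_Pv V).measurable.comp h1

/-- The jointly measurable surrogate. -/
noncomputable def Xi (V : Submodule ℝ (EuclideanSpace ℝ (Fin n)))
    (p : Measure (EuclideanSpace ℝ (Fin n)) × Matrix (Fin n) (Fin n) ℝ) : ℝ :=
  LD ((subP p.1).map (BB V p.2))

lemma measurable_Xi (V : Submodule ℝ (EuclideanSpace ℝ (Fin n))) :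
    Measurable (Xi V) := by
  refine measurable_LD.comp ?_
  apply Measure.measurable_of_measurable_coe
  intro s hs
  have h1 : (fun p : Measure (EuclideanSpace ℝ (Fin n)) × Matrix (Fin n) (Fin n) ℝ =>
      ((subP p.1).map (BB V p.2)) s)
      = fun p => subP p.1 (Prod.mk p ⁻¹'
          {q : (Measure (EuclideanSpace ℝ (Fin n)) × Matrix (Fin n) (Fin n) ℝ)
              × EuclideanSpace ℝ (Fin n) | BB V q.1.2 q.2 ∈ s}) := by
    funext p
    rw [Measure.map_apply (measurable_BB V p.2) hs]
    rfl
  rw [h1]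
  refine measurable_subP_apply measurable_fst ?_
  exact ((measurable_BB_uncurry V).comp
    ((measurable_snd.comp measurable_fst).prodMk measurable_snd)) hs


lemma Xi_eq (V : Submodule ℝ (EuclideanSpace ℝ (Fin n)))
    {μ : Measure (EuclideanSpace ℝ (Fin n))} (hμ : IsProbabilityMeasure μ)
    {g : Matrix (Fin n) (Fin n) ℝ} (hg : g ∈ Matrix.orthogonalGroup (Fin n) ℝ) :
    Xi V (μ, g) = lowerDim (μ.map (fun x =>
      Submodule.orthogonalProjectionOnto (V.map (Matrix.toEuclideanLin g :
        EuclideanSpace ℝ (Fin n) →ₗ[ℝ] EuclideanSpace ℝ (Fin n))) x)) := by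
  have hμ1 : μ univ ≤ 1 := le_of_eq measure_univ
  have hmapBB : IsProbabilityMeasure (μ.map (BB V g)) :=
    Measure.isProbabilityMeasure_map (measurable_BB V g).aemeasurable
  have h0 : Xi V (μ, g) = LD (μ.map (BB V g)) := by
    rw [Xi, subP_eq hμ1]
  rw [h0, LD_eq (le_of_eq (measure_univ (μ := μ.map (BB V g))))]
  have hTg := measurableEmbedding_toEuclideanLin hg
  have hiso := isometry_toEuclideanLin hg
  rw [lowerDim_proj_subtype]
  have hcomp : μ.map (Pv (V.map (Matrix.toEuclideanLin g :
      EuclideanSpace ℝ (Fin n) →ₗ[ℝ] EuclideanSpace ℝ (Fin n))))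
      = (μ.map (BB V g)).map (⇑(Matrix.toEuclideanLin g)) := by
    rw [Measure.map_map hTg.measurable (measurable_BB V g)]
    congr 1
    funext x
    exact proj_conj hg V x
  rw [hcomp, lowerDim_map_isometry hTg hiso]

lemma lowerDim_proj_LD (V : Submodule ℝ (EuclideanSpace ℝ (Fin n)))
    {ν : Measure (EuclideanSpace ℝ (Fin n))} (hν : IsProbabilityMeasure ν) :
    lowerDim (ν.map (fun x => Submodule.orthogonalProjectionOnto V x)) = LD (ν.map (Pv V)) := by
  have : IsProbabilityMeasure (ν.map (Pv V)) :=
    Measure.isProbabilityMeasure_map (continuous_Pv V).measurable.aemeasurable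
  rw [lowerDim_proj_subtype, LD_eq (le_of_eq (measure_univ (μ := ν.map (Pv V))))]


end Cor27

open Cor27 in
theorem mean_proj_dim_of_SO_invariant {n k : ℕ} (hk1 : 1 ≤ k) (hkn : k ≤ n - 1)
    (νG : Measure (Matrix (Fin n) (Fin n) ℝ)) [IsProbabilityMeasure νG]
    (hνGsupp : ∀ᵐ g ∂νG, g ∈ Matrix.orthogonalGroup (Fin n) ℝ)
    (hνGinv : ∀ h : Matrix (Fin n) (Fin n) ℝ, h ∈ Matrix.orthogonalGroup (Fin n) ℝ →
      νG.map (fun g => h * g) = νG)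
    (P : Measure (Measure (EuclideanSpace ℝ (Fin n)))) [IsProbabilityMeasure P]
    (hPprob : ∀ᵐ μ ∂P, IsProbabilityMeasure μ)
    (hPSO : ∀ g : Matrix (Fin n) (Fin n) ℝ, g ∈ Matrix.orthogonalGroup (Fin n) ℝ →
      g.det = 1 →
      P.map (fun μ => μ.map (Matrix.toEuclideanLin g : EuclideanSpace ℝ (Fin n) →ₗ[ℝ] EuclideanSpace ℝ (Fin n))) = P)
    (δ : ℝ) (hδ : ∀ᵐ μ ∂P, lowerDim μ = δ)
    (hMarstrand : ∀ μ : Measure (EuclideanSpace ℝ (Fin n)), IsProbabilityMeasure μ →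
      ∀ V₀ : Submodule ℝ (EuclideanSpace ℝ (Fin n)), Module.finrank ℝ V₀ = k →
      ∀ᵐ g ∂νG, lowerDim (μ.map (fun x =>
        Submodule.orthogonalProjectionOnto (V₀.map (Matrix.toEuclideanLin g : EuclideanSpace ℝ (Fin n) →ₗ[ℝ] EuclideanSpace ℝ (Fin n))) x)) =
        min (k : ℝ) (lowerDim μ))
    (V : Submodule ℝ (EuclideanSpace ℝ (Fin n))) (hV : Module.finrank ℝ V = k) :
    (∫ μ, lowerDim (μ.map (fun x => Submodule.orthogonalProjectionOnto V x)) ∂P) = min (k : ℝ) δ := by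
  classical
  set c : ℝ := min (k : ℝ) δ with hc
  -- Step 1: a.e. (μ, g), Xi V (μ, g) = c
  have hae1 : ∀ᵐ μ ∂P, ∀ᵐ g ∂νG, Xi V (μ, g) = c := by
    filter_upwards [hPprob, hδ] with μ hμp hμδ
    filter_upwards [hMarstrand μ hμp V hV, hνGsupp] with g hg1 hg2
    rw [Xi_eq V hμp hg2, hg1, hμδ]
  -- Step 2: Fubini swap
  have hXmeas := measurable_Xi (n := n) V
  set s : Set (Measure (EuclideanSpace ℝ (Fin n)) × Matrix (Fin n) (Fin n) ℝ) :=
    {p | Xi V p ≠ c} with hs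
  have hsmeas : MeasurableSet s := (hXmeas (measurableSet_singleton c)).compl
  have h0 : (P.prod νG) s = 0 := by
    rw [Measure.measure_prod_null hsmeas]
    filter_upwards [hae1] with μ hμ
    exact ae_iff.mp hμ
  -- swapped nullity
  have hswap : (νG.prod P) (Prod.swap ⁻¹' s) = 0 := by
    have h1 : νG.prod P = (P.prod νG).map Prod.swap := (Measure.prod_swap).symm
    rw [h1, Measure.map_apply measurable_swap (measurable_swap hsmeas)]
    have h2 : Prod.swap ⁻¹' (Prod.swap ⁻¹' s) = s := by
      ext p; simp
    rw [h2, h0]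
  have hae2 : ∀ᵐ g ∂νG, P (Prod.mk g ⁻¹' (Prod.swap ⁻¹' s)) = 0 :=
    (Measure.measure_prod_null (measurable_swap hsmeas)).mp hswap
  -- measurable version of the good-g predicate
  set t' : Set (Matrix (Fin n) (Fin n) ℝ × Measure (EuclideanSpace ℝ (Fin n))) :=
    Prod.swap ⁻¹' s with ht'
  have ht'meas : MeasurableSet t' := measurable_swap hsmeas
  have hPmeas : Measurable fun g : Matrix (Fin n) (Fin n) ℝ => P (Prod.mk g ⁻¹' t') :=
    ProbabilityTheory.Kernel.measurable_kernel_prodMk_left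
      (κ := ProbabilityTheory.Kernel.const _ P) ht'meas
  set T : Set (Matrix (Fin n) (Fin n) ℝ) := {g | P (Prod.mk g ⁻¹' t') ≠ 0} with hT
  have hTmeas : MeasurableSet T := (hPmeas (measurableSet_singleton 0)).compl
  have hT0 : νG T = 0 := ae_iff.mp hae2
  -- the reflection matrix h
  have hn : 0 < n := by omega
  set i0 : Fin n := ⟨0, hn⟩ with hi0
  set h : Matrix (Fin n) (Fin n) ℝ :=
    Matrix.diagonal (fun i => if i = i0 then (-1 : ℝ) else 1) with hh
  have hstar : star h = h := by
    rw [hh, Matrix.star_eq_conjTranspose, Matrix.diagonal_conjTranspose]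
    apply congrArg Matrix.diagonal
    funext i
    simp
  have hsq : h * h = 1 := by
    rw [hh, Matrix.diagonal_mul_diagonal, ← Matrix.diagonal_one]
    apply congrArg Matrix.diagonal
    funext i
    split_ifs <;> norm_num
  have hhO : h ∈ Matrix.orthogonalGroup (Fin n) ℝ := by
    rw [Unitary.mem_iff, hstar]
    exact ⟨hsq, hsq⟩
  have hdeth : h.det = -1 := by
    rw [hh, Matrix.det_diagonal]
    rw [Finset.prod_ite_eq' Finset.univ i0 (fun _ => (-1:ℝ))]
    simp
  -- translate the null set by h
  have hmul : Measurable fun g : Matrix (Fin n) (Fin n) ℝ => h * g := by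
    apply measurable_pi_lambda
    intro i
    apply measurable_pi_lambda
    intro j
    have hcoord : ∀ g : Matrix (Fin n) (Fin n) ℝ, (h * g) i j = ∑ l, h i l * g l j := by
      intro g; rw [Matrix.mul_apply]
    simp only [hcoord]
    apply Finset.measurable_sum
    intro l _
    have hlj : Measurable fun g : Matrix (Fin n) (Fin n) ℝ => g l j := by
      have h1 : Measurable fun g : Matrix (Fin n) (Fin n) ℝ => g l :=
        measurable_pi_apply (X := fun _ : Fin n => Fin n → ℝ) l
      exact (measurable_pi_apply (X := fun _ : Fin n => ℝ) j).comp h1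
    exact measurable_const.mul hlj
  have hTh : νG ((fun g => h * g) ⁻¹' T) = 0 := by
    have h1 : νG ((fun g => h * g) ⁻¹' T) = (νG.map (fun g => h * g)) T :=
      (Measure.map_apply hmul hTmeas).symm
    rw [h1, hνGinv h hhO, hT0]
  -- pick a good g
  have hgood : ∀ᵐ g ∂νG, g ∈ Matrix.orthogonalGroup (Fin n) ℝ ∧ g ∉ T ∧ (h * g) ∉ T := by
    have e1 : ∀ᵐ g ∂νG, g ∉ T := measure_eq_zero_iff_ae_notMem.mp hT0
    have e2 : ∀ᵐ g ∂νG, (h * g) ∉ T := measure_eq_zero_iff_ae_notMem.mp hTh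
    filter_upwards [hνGsupp, e1, e2] with g h1 h2 h3
    exact ⟨h1, h2, h3⟩
  have hne : (ae νG).NeBot := ae_neBot.mpr (IsProbabilityMeasure.ne_zero νG)
  obtain ⟨g, hgO, hgT, hghT⟩ := hgood.exists
  -- determinant of g
  have hdetg : g.det = 1 ∨ g.det = -1 := by
    have h1 : star g * g = 1 := (Unitary.mem_iff.mp hgO).1
    have h2 : g.det * g.det = 1 := by
      have := congrArg Matrix.det h1
      rwa [Matrix.det_mul, Matrix.star_eq_conjTranspose, Matrix.det_conjTranspose,
        star_trivial, Matrix.det_one] at this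
    exact mul_self_eq_one_iff.mp h2
  obtain ⟨g₀, hg₀O, hg₀det, hg₀T⟩ :
      ∃ g₀, g₀ ∈ Matrix.orthogonalGroup (Fin n) ℝ ∧ g₀.det = 1 ∧ g₀ ∉ T := by
    rcases hdetg with h1 | h1
    · exact ⟨g, hgO, h1, hgT⟩
    · refine ⟨h * g, mul_mem hhO hgO, ?_, hghT⟩
      rw [Matrix.det_mul, hdeth, h1]; ring
  -- g₀ ∉ T means P-a.e. μ, Xi V (μ, g₀) = c
  have hQg₀ : ∀ᵐ μ ∂P, Xi V (μ, g₀) = c := by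
    have h1 : P (Prod.mk g₀ ⁻¹' t') = 0 := not_not.mp hg₀T
    have h2 : (Prod.mk g₀ ⁻¹' t') = {μ | Xi V (μ, g₀) ≠ c} := rfl
    rw [h2] at h1
    exact h1
  -- transport along the SO(n)-invariance
  set F : Measure (EuclideanSpace ℝ (Fin n)) → Measure (EuclideanSpace ℝ (Fin n)) :=
    fun μ => μ.map (Matrix.toEuclideanLin g₀ :
      EuclideanSpace ℝ (Fin n) →ₗ[ℝ] EuclideanSpace ℝ (Fin n)) with hF
  have hTg₀meas : Measurable (⇑(Matrix.toEuclideanLin g₀ :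
      EuclideanSpace ℝ (Fin n) →ₗ[ℝ] EuclideanSpace ℝ (Fin n))) :=
    (Matrix.toEuclideanLin g₀ :
      EuclideanSpace ℝ (Fin n) →ₗ[ℝ] EuclideanSpace ℝ (Fin n)).continuous_of_finiteDimensional.measurable
  have hFmeas : Measurable F := Measure.measurable_map _ hTg₀meas
  have hNmeas : MeasurableSet {μ : Measure (EuclideanSpace ℝ (Fin n)) | Xi V (μ, g₀) ≠ c} := by
    have : Measurable fun μ : Measure (EuclideanSpace ℝ (Fin n)) => Xi V (μ, g₀) :=
      hXmeas.comp (measurable_id.prodMk measurable_const)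
    exact (this (measurableSet_singleton c)).compl
  have hQF : ∀ᵐ ν ∂P, Xi V (F ν, g₀) = c := by
    have h1 : P (F ⁻¹' {μ | Xi V (μ, g₀) ≠ c}) = 0 := by
      rw [← Measure.map_apply hFmeas hNmeas, hPSO g₀ hg₀O hg₀det]
      exact ae_iff.mp hQg₀
    exact h1
  -- final pointwise identity
  have hfinal : ∀ᵐ ν ∂P, lowerDim (ν.map (fun x => Submodule.orthogonalProjectionOnto V x)) = c := by
    filter_upwards [hPprob, hQF] with ν hνp hνF
    have hFν : IsProbabilityMeasure (F ν) := Measure.isProbabilityMeasure_map hTg₀meas.aemeasurable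
    have h1 : Xi V (F ν, g₀) = LD ((F ν).map (BB V g₀)) := by
      rw [Xi, subP_eq (le_of_eq (measure_univ (μ := F ν)))]
    have h2 : (F ν).map (BB V g₀) = ν.map (Pv V) := by
      rw [hF]
      rw [Measure.map_map (measurable_BB V g₀) hTg₀meas]
      congr 1
      funext x
      show Pv V (Matrix.toEuclideanLin (star g₀) (Matrix.toEuclideanLin g₀ x)) = Pv V x
      rw [toEuclideanLin_star_apply hg₀O]
    rw [lowerDim_proj_LD V hνp, ← h2, ← h1, hνF]
  rw [integral_congr_ae hfinal]
  simp [measure_univ]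
end
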